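/- Let σ be a finite Borel measure on the unit circle and F a finite-dimensional subspace of L²(σ) such that z·F ⊆ F + span{1}. If F contains no indicator function of a singleton, then F is a direct sum of subspaces Q(λ_k, p_k) for finitely many points λ_k ∈ ℂ, where Q(λ,p) = span{(z-λ)^{-j} : 1 ≤ j ≤ p}. -/

import Mathlib

open MeasureTheory

/-- The one-dimensional subspace of `L²(σ)` spanned by the constant function `1`. -/
noncomputable def oneSpan (σ : MeasureTheory.Measure ℂ) : Submodule ℂ (Lp ℂ 2 σ) :=
  Submodule.span ℂ {g : Lp ℂ 2 σ | (g : ℂ → ℂ) =ᵐ[σ] fun _ => (1 : ℂ)}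

/-- `Q(l, p) = span{(z - l)^{-j} : 1 ≤ j ≤ p}` inside `L²(σ)`. -/
noncomputable def Qspace (σ : MeasureTheory.Measure ℂ) (l : ℂ) (p : ℕ) : Submodule ℂ (Lp ℂ 2 σ) :=
  Submodule.span ℂ {g : Lp ℂ 2 σ | ∃ j : ℕ, 1 ≤ j ∧ j ≤ p ∧
    (g : ℂ → ℂ) =ᵐ[σ] fun ξ => ((ξ - l)⁻¹) ^ j}

set_option linter.unusedSectionVars false

lemma iSupIndep_map {ι : Type*} {M N : Type*} [AddCommGroup M] [Module ℂ M]
    [AddCommGroup N] [Module ℂ N]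
    {f : M →ₗ[ℂ] N} (hf : Function.Injective f) {t : ι → Submodule ℂ M}
    (ht : iSupIndep t) : iSupIndep fun i => (t i).map f := by
  intro i
  have h1 : (⨆ j, ⨆ (_ : j ≠ i), (t j).map f) = ((⨆ j, ⨆ (_ : j ≠ i), t j)).map f := by
    simp_rw [Submodule.map_iSup]
  rw [h1, disjoint_iff, ← Submodule.map_inf f hf, disjoint_iff.mp (ht i), Submodule.map_bot]


section Aux

variable {σ : MeasureTheory.Measure ℂ} [IsFiniteMeasure σ]

noncomputable def eOne (σ : MeasureTheory.Measure ℂ) [IsFiniteMeasure σ] : Lp ℂ 2 σ :=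
  (memLp_const (1:ℂ)).toLp _

lemma eOne_ae : (eOne σ : ℂ → ℂ) =ᵐ[σ] fun _ => (1:ℂ) := MemLp.coeFn_toLp _

lemma oneSpan_eq : oneSpan σ = (Submodule.span ℂ {eOne σ}) := by
  unfold oneSpan; congr 1; ext g
  simp only [Set.mem_setOf_eq, Set.mem_singleton_iff]
  exact ⟨fun h => Lp.ext (h.trans (eOne_ae (σ := σ)).symm), fun h => h ▸ eOne_ae⟩

lemma coeFn_sum' {ι} (s : Finset ι) (g : ι → Lp ℂ 2 σ) :
    ((∑ i ∈ s, g i : Lp ℂ 2 σ) : ℂ → ℂ) =ᵐ[σ] fun ξ => ∑ i ∈ s, g i ξ := by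
  classical
  induction s using Finset.induction_on with
  | empty => simp; exact Lp.coeFn_zero ℂ 2 σ
  | insert a s' hx ih =>
    rw [Finset.sum_insert hx]
    filter_upwards [Lp.coeFn_add (g a) (∑ i ∈ s', g i), ih] with ξ h1 h2
    rw [h1, Finset.sum_insert hx, Pi.add_apply, h2]

lemma comb_ae {ι : Type} (s : Finset ι) (c : ι → ℂ) (g : ι → Lp ℂ 2 σ) :
    ((∑ i ∈ s, c i • g i : Lp ℂ 2 σ) : ℂ → ℂ) =ᵐ[σ] fun ξ => ∑ i ∈ s, c i * g i ξ := by
  refine (coeFn_sum' s _).trans ?_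
  have h : ∀ᵐ ξ ∂σ, ∀ i ∈ s, ((c i • g i : Lp ℂ 2 σ) : ℂ → ℂ) ξ = c i * g i ξ := by
    rw [Filter.eventually_all_finset]
    intro i _
    filter_upwards [Lp.coeFn_smul (c i) (g i)] with ξ h1
    rw [h1, Pi.smul_apply, smul_eq_mul]
  filter_upwards [h] with ξ h1
  exact Finset.sum_congr rfl h1


lemma indicator_trick (F : Submodule ℂ (Lp ℂ 2 σ))
    (hnoind : ∀ (l : ℂ) (g : Lp ℂ 2 σ), g ∈ F →
      (g : ℂ → ℂ) =ᵐ[σ] Set.indicator {l} (fun _ => (1 : ℂ)) → g = 0)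
    (f : Lp ℂ 2 σ) (hfF : f ∈ F) (l : ℂ)
    (h : ∀ᵐ ξ ∂σ, (ξ - l) * (f : ℂ → ℂ) ξ = 0) : f = 0 := by
  set c : ℂ := (f : ℂ → ℂ) l with hc
  have key : ∀ᵐ ξ ∂σ, (f : ℂ → ℂ) ξ = c * Set.indicator {l} (fun _ => (1:ℂ)) ξ ∨ ξ = l := by
    filter_upwards [h] with ξ hξ
    rcases eq_or_ne ξ l with hl | hl
    · right; exact hl
    · left
      have : ξ - l ≠ 0 := sub_ne_zero.mpr hl
      have hf0 : (f : ℂ → ℂ) ξ = 0 := by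
        rcases mul_eq_zero.mp hξ with h' | h'
        · exact absurd h' this
        · exact h'
      rw [hf0, Set.indicator_of_notMem (by simpa using hl)]
      ring
  have key2 : (f : ℂ → ℂ) =ᵐ[σ] fun ξ => c * Set.indicator {l} (fun _ => (1:ℂ)) ξ := by
    filter_upwards [key] with ξ hξ
    rcases hξ with h' | rfl
    · exact h'
    · simp [Set.indicator_of_mem, hc]
  rcases eq_or_ne c 0 with hc0 | hc0
  · refine Lp.ext (key2.trans ?_)
    rw [hc0]
    simp; exact (Lp.coeFn_zero ℂ 2 σ).symm
  · have hgF : c⁻¹ • f ∈ F := F.smul_mem _ hfF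
    have : (c⁻¹ • f : Lp ℂ 2 σ) = 0 := by
      refine hnoind l _ hgF ?_
      filter_upwards [Lp.coeFn_smul c⁻¹ f, key2] with ξ h1 h2
      rw [h1, Pi.smul_apply, smul_eq_mul, h2, ← mul_assoc, inv_mul_cancel₀ hc0, one_mul]
    have := congrArg (fun x => c • x) this
    simpa [smul_smul, mul_inv_cancel₀ hc0] using this

lemma exists_op (F : Submodule ℂ (Lp ℂ 2 σ))
    (hinv : ∀ f : Lp ℂ 2 σ, f ∈ F →
      ∃ g : Lp ℂ 2 σ, g ∈ F ⊔ oneSpan σ ∧ (g : ℂ → ℂ) =ᵐ[σ] fun ξ => ξ * f ξ)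
    (he : eOne σ ∉ F) :
    ∃ (A : F →ₗ[ℂ] F) (cf : F →ₗ[ℂ] ℂ), ∀ f : F,
      ∀ᵐ ξ ∂σ, ((A f : Lp ℂ 2 σ) : ℂ → ℂ) ξ + cf f = ξ * ((f : Lp ℂ 2 σ) : ℂ → ℂ) ξ := by
  classical
  set P : F → F × ℂ → Prop := fun f ud =>
    ∀ᵐ ξ ∂σ, ((ud.1 : Lp ℂ 2 σ) : ℂ → ℂ) ξ + ud.2 = ξ * ((f : Lp ℂ 2 σ) : ℂ → ℂ) ξ with hP
  have hex : ∀ f : F, ∃ ud, P f ud := by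
    intro f
    obtain ⟨g, hg, hgae⟩ := hinv f f.2
    rw [oneSpan_eq, Submodule.mem_sup] at hg
    obtain ⟨u, hu, v, hv, rfl⟩ := hg
    obtain ⟨d, rfl⟩ := Submodule.mem_span_singleton.mp hv
    refine ⟨⟨⟨u, hu⟩, d⟩, ?_⟩
    filter_upwards [hgae, Lp.coeFn_add u (d • eOne σ), Lp.coeFn_smul d (eOne σ), eOne_ae (σ := σ)]
      with ξ h1 h2 h3 h4
    simp only [Pi.add_apply, Pi.smul_apply, smul_eq_mul] at h1 h2 h3
    rw [← h1, h2, h3, h4, mul_one]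
  have huniq : ∀ f ud ud', P f ud → P f ud' → ud = ud' := by
    rintro f ⟨u, d⟩ ⟨u', d'⟩ h h'
    have hdiff : ((u : Lp ℂ 2 σ) : ℂ → ℂ) =ᵐ[σ] fun ξ => (u' : Lp ℂ 2 σ) ξ + (d' - d) := by
      filter_upwards [h, h'] with ξ h1 h2
      rw [← h2] at h1; linear_combination h1
    have hd : d = d' := by
      by_contra hdd
      have heq : ((u : Lp ℂ 2 σ) - u') = (d' - d) • eOne σ := by
        refine Lp.ext ?_
        filter_upwards [hdiff, Lp.coeFn_sub (u : Lp ℂ 2 σ) u', Lp.coeFn_smul (d' - d) (eOne σ),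
          eOne_ae (σ := σ)] with ξ h1 h2 h3 h4
        rw [h2, Pi.sub_apply, h1, h3, Pi.smul_apply, h4, smul_eq_mul, mul_one]; ring
      have hmem : ((d' - d) • eOne σ) ∈ F := heq ▸ F.sub_mem u.2 u'.2
      have : eOne σ ∈ F := by
        have := F.smul_mem (d' - d)⁻¹ hmem
        rwa [smul_smul, inv_mul_cancel₀ (sub_ne_zero.mpr (Ne.symm hdd)), one_smul] at this
      exact he this
    subst hd
    have hu : u = u' := by
      apply Subtype.ext
      refine Lp.ext ?_
      filter_upwards [hdiff] with ξ h1
      rw [h1]; ring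
    rw [hu]
  set Af : F → F := fun f => (Classical.choose (hex f)).1 with hAf
  set cf0 : F → ℂ := fun f => (Classical.choose (hex f)).2 with hcf0
  have hspec : ∀ f : F, P f (Af f, cf0 f) := fun f => Classical.choose_spec (hex f)
  have hadd : ∀ f g : F, Af (f + g) = Af f + Af g ∧ cf0 (f + g) = cf0 f + cf0 g := by
    intro f g
    have h2 : P (f + g) (Af f + Af g, cf0 f + cf0 g) := by
      filter_upwards [hspec f, hspec g,
        Lp.coeFn_add (Af f : Lp ℂ 2 σ) (Af g : Lp ℂ 2 σ),
        Lp.coeFn_add (f : Lp ℂ 2 σ) (g : Lp ℂ 2 σ)] with ξ h1 h2 h3 h4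
      show (((Af f : Lp ℂ 2 σ) + (Af g : Lp ℂ 2 σ) : Lp ℂ 2 σ) : ℂ → ℂ) ξ + (cf0 f + cf0 g)
          = ξ * (((f : Lp ℂ 2 σ) + (g : Lp ℂ 2 σ) : Lp ℂ 2 σ) : ℂ → ℂ) ξ
      rw [h3, h4, Pi.add_apply, Pi.add_apply]
      linear_combination h1 + h2
    have := huniq _ _ _ (hspec (f + g)) h2
    exact ⟨congrArg Prod.fst this, congrArg Prod.snd this⟩
  have hsmul : ∀ (a : ℂ) (f : F), Af (a • f) = a • Af f ∧ cf0 (a • f) = a • cf0 f := by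
    intro a f
    have h2 : P (a • f) (a • Af f, a • cf0 f) := by
      filter_upwards [hspec f,
        Lp.coeFn_smul a (Af f : Lp ℂ 2 σ), Lp.coeFn_smul a (f : Lp ℂ 2 σ)] with ξ h1 h3 h4
      show ((a • (Af f : Lp ℂ 2 σ) : Lp ℂ 2 σ) : ℂ → ℂ) ξ + a • cf0 f
          = ξ * ((a • (f : Lp ℂ 2 σ) : Lp ℂ 2 σ) : ℂ → ℂ) ξ
      rw [h3, h4, Pi.smul_apply, Pi.smul_apply, smul_eq_mul, smul_eq_mul, smul_eq_mul]
      linear_combination a * h1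
    have := huniq _ _ _ (hspec (a • f)) h2
    exact ⟨congrArg Prod.fst this, congrArg Prod.snd this⟩
  refine ⟨⟨⟨Af, fun f g => (hadd f g).1⟩, fun a f => (hsmul a f).1⟩,
    ⟨⟨cf0, fun f g => (hadd f g).2⟩, fun a f => (hsmul a f).2⟩, hspec⟩

lemma case_e_mem (F : Submodule ℂ (Lp ℂ 2 σ)) (hfd : FiniteDimensional ℂ F)
    (hinv : ∀ f : Lp ℂ 2 σ, f ∈ F →
      ∃ g : Lp ℂ 2 σ, g ∈ F ⊔ oneSpan σ ∧ (g : ℂ → ℂ) =ᵐ[σ] fun ξ => ξ * f ξ)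
    (hnoind : ∀ (l : ℂ) (g : Lp ℂ 2 σ), g ∈ F →
      (g : ℂ → ℂ) =ᵐ[σ] Set.indicator {l} (fun _ => (1 : ℂ)) → g = 0)
    (he : eOne σ ∈ F) : F = ⊥ := by
  classical
  by_contra hbot
  have hsup : F ⊔ oneSpan σ = F := by
    rw [oneSpan_eq, sup_eq_left]
    exact (Submodule.span_singleton_le_iff_mem _ _).mpr he
  set P : F → F → Prop := fun f g =>
    ((g : Lp ℂ 2 σ) : ℂ → ℂ) =ᵐ[σ] fun ξ => ξ * ((f : Lp ℂ 2 σ) : ℂ → ℂ) ξ with hP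
  have hex : ∀ f : F, ∃ g, P f g := by
    intro f
    obtain ⟨g, hg, hgae⟩ := hinv f f.2
    rw [hsup] at hg
    exact ⟨⟨g, hg⟩, hgae⟩
  have huniq : ∀ f g g', P f g → P f g' → g = g' := fun f g g' h h' =>
    Subtype.ext (Lp.ext (h.trans h'.symm))
  set Af : F → F := fun f => Classical.choose (hex f) with hAf
  have hspec : ∀ f, P f (Af f) := fun f => Classical.choose_spec (hex f)
  have hadd : ∀ f g : F, Af (f + g) = Af f + Af g := by
    intro f g
    refine huniq _ _ _ (hspec (f + g)) ?_
    filter_upwards [hspec f, hspec g,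
      Lp.coeFn_add (Af f : Lp ℂ 2 σ) (Af g : Lp ℂ 2 σ),
      Lp.coeFn_add (f : Lp ℂ 2 σ) (g : Lp ℂ 2 σ)] with ξ h1 h2 h3 h4
    show ((((Af f : Lp ℂ 2 σ) + (Af g : Lp ℂ 2 σ)) : Lp ℂ 2 σ) : ℂ → ℂ) ξ
        = ξ * ((((f : Lp ℂ 2 σ) + (g : Lp ℂ 2 σ)) : Lp ℂ 2 σ) : ℂ → ℂ) ξ
    rw [h3, h4, Pi.add_apply, Pi.add_apply, h1, h2]; ring
  have hsmul : ∀ (a : ℂ) (f : F), Af (a • f) = a • Af f := by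
    intro a f
    refine huniq _ _ _ (hspec (a • f)) ?_
    filter_upwards [hspec f, Lp.coeFn_smul a (Af f : Lp ℂ 2 σ),
      Lp.coeFn_smul a (f : Lp ℂ 2 σ)] with ξ h1 h3 h4
    show (((a • (Af f : Lp ℂ 2 σ)) : Lp ℂ 2 σ) : ℂ → ℂ) ξ
        = ξ * (((a • (f : Lp ℂ 2 σ)) : Lp ℂ 2 σ) : ℂ → ℂ) ξ
    rw [h3, h4, Pi.smul_apply, Pi.smul_apply, h1, smul_eq_mul, smul_eq_mul]; ring
  set A : F →ₗ[ℂ] F := ⟨⟨Af, hadd⟩, hsmul⟩ with hA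
  have : Nontrivial F := Submodule.nontrivial_iff_ne_bot.mpr hbot
  obtain ⟨μ, hμ⟩ := Module.End.exists_eigenvalue A
  obtain ⟨v, hv⟩ := hμ.exists_hasEigenvector
  have hAv : A v = μ • v := hv.apply_eq_smul
  have hv0 : (v : Lp ℂ 2 σ) = 0 := by
    refine indicator_trick F hnoind _ v.2 μ ?_
    have h1 := hspec v
    rw [show Af v = A v from rfl, hAv] at h1
    filter_upwards [h1, Lp.coeFn_smul μ (v : Lp ℂ 2 σ)] with ξ h1 h2
    have : ((μ • (v : Lp ℂ 2 σ) : Lp ℂ 2 σ) : ℂ → ℂ) ξ = ξ * (v : Lp ℂ 2 σ) ξ := h1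
    rw [h2, Pi.smul_apply, smul_eq_mul] at this
    linear_combination -this
  exact hv.right (Subtype.ext hv0)

set_option maxHeartbeats 1000000 in
lemma key (F : Submodule ℂ (Lp ℂ 2 σ)) (hfd : FiniteDimensional ℂ F)
    (hnoind : ∀ (l : ℂ) (g : Lp ℂ 2 σ), g ∈ F →
      (g : ℂ → ℂ) =ᵐ[σ] Set.indicator {l} (fun _ => (1 : ℂ)) → g = 0)
    (A : F →ₗ[ℂ] F) (cf : F →ₗ[ℂ] ℂ)
    (hspec : ∀ f : F, ∀ᵐ ξ ∂σ,
      ((A f : Lp ℂ 2 σ) : ℂ → ℂ) ξ + cf f = ξ * ((f : Lp ℂ 2 σ) : ℂ → ℂ) ξ)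
    (μ : ℂ) (hμ : Module.End.maxGenEigenspace A μ ≠ ⊥) :
    ∃ p : ℕ, 1 ≤ p ∧ (∀ j : ℕ, 1 ≤ j → j ≤ p → MemLp (fun ξ => ((ξ - μ)⁻¹) ^ j) 2 σ) ∧
      Qspace σ μ p = Submodule.map F.subtype (Module.End.maxGenEigenspace A μ) := by
  classical
  set B : Module.End ℂ F := A - μ • 1 with hBdef
  -- pointwise description of B
  have hB : ∀ f : F, ∀ᵐ ξ ∂σ,
      ((B f : Lp ℂ 2 σ) : ℂ → ℂ) ξ = (ξ - μ) * ((f : Lp ℂ 2 σ) : ℂ → ℂ) ξ - cf f := by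
    intro f
    have hBf : (B f : Lp ℂ 2 σ) = (A f : Lp ℂ 2 σ) - μ • (f : Lp ℂ 2 σ) := by
      rw [hBdef]; rfl
    filter_upwards [hspec f, Lp.coeFn_sub (A f : Lp ℂ 2 σ) (μ • (f : Lp ℂ 2 σ)),
      Lp.coeFn_smul μ (f : Lp ℂ 2 σ)] with ξ h1 h2 h3
    rw [hBf, h2, Pi.sub_apply, h3, Pi.smul_apply, smul_eq_mul]
    linear_combination h1
  -- existence of a genuine eigenvector
  obtain ⟨x, hxN, hx0⟩ := Submodule.exists_mem_ne_zero_of_ne_bot hμ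
  obtain ⟨k0, hk0⟩ := (Module.End.mem_maxGenEigenspace A μ x).mp hxN
  have hexk : ∃ k, (B ^ k) x = 0 := ⟨k0, by rw [hBdef]; exact hk0⟩
  set k1 := Nat.find hexk with hk1
  have hk1spec : (B ^ k1) x = 0 := Nat.find_spec hexk
  have hk1pos : 0 < k1 :=
    Nat.pos_of_ne_zero (fun h => hx0 (by simpa [h] using hk1spec))
  set v : F := (B ^ (k1 - 1)) x with hv
  have hv0 : v ≠ 0 := fun h => Nat.find_min hexk (Nat.sub_lt hk1pos one_pos) h
  have hvB : B v = 0 := by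
    rw [hv, ← Module.End.mul_apply, ← pow_succ', Nat.sub_add_cancel hk1pos]
    exact hk1spec
  -- the eigen-relation
  have hveq : ∀ᵐ ξ ∂σ, (ξ - μ) * ((v : Lp ℂ 2 σ) : ℂ → ℂ) ξ = cf v := by
    have h := hB v
    rw [hvB] at h
    have hz : ((0 : F) : Lp ℂ 2 σ) = 0 := rfl
    rw [hz] at h
    filter_upwards [h, Lp.coeFn_zero ℂ 2 σ] with ξ h1 h2
    rw [h2, Pi.zero_apply] at h1
    linear_combination -h1
  -- cf v ≠ 0
  have hc0 : cf v ≠ 0 := by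
    intro hc
    apply hv0
    apply Subtype.ext
    refine indicator_trick F hnoind _ (v : F).2 μ ?_
    filter_upwards [hveq] with ξ h1
    rw [h1, hc]
  -- no atom at μ
  have hatom : ∀ᵐ ξ ∂σ, ξ ≠ μ := by
    have h1 : σ {ξ : ℂ | ¬ ((ξ - μ) * ((v : Lp ℂ 2 σ) : ℂ → ℂ) ξ = cf v)} = 0 :=
      by exact hveq
    have h2 : {(μ : ℂ)} ⊆ {ξ : ℂ | ¬ ((ξ - μ) * ((v : Lp ℂ 2 σ) : ℂ → ℂ) ξ = cf v)} := by
      intro ξ hξ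
      rcases hξ with rfl
      simp only [Set.mem_setOf_eq, sub_self, zero_mul]
      exact fun h => hc0 h.symm
    have h3 : σ {(μ : ℂ)} = 0 := le_antisymm (h1 ▸ measure_mono h2) (by simp)
    rw [ae_iff]
    convert h3 using 2
    ext ξ
    simp
  -- Lem1: extraction of partial fraction form
  have lem1 : ∀ (j : ℕ) (f : F), (B ^ j) f = 0 → ∃ a : Fin j → ℂ,
      ((f : Lp ℂ 2 σ) : ℂ → ℂ) =ᵐ[σ]
        fun ξ => ∑ i : Fin j, a i * ((ξ - μ)⁻¹) ^ ((i : ℕ) + 1) := by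
    intro j
    induction j with
    | zero =>
      intro f hf
      rw [pow_zero] at hf
      have hf0 : f = 0 := hf
      refine ⟨fun _ => 0, ?_⟩
      rw [hf0]
      have hz : ((0 : F) : Lp ℂ 2 σ) = 0 := rfl
      rw [hz]
      filter_upwards [Lp.coeFn_zero ℂ 2 σ] with ξ h1
      rw [h1]
      simp
    | succ j ih =>
      intro f hf
      have hg : (B ^ j) (B f) = 0 := by
        rw [← Module.End.mul_apply, ← pow_succ]
        exact hf
      obtain ⟨a, ha⟩ := ih (B f) hg
      refine ⟨Fin.cons (cf f) a, ?_⟩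
      filter_upwards [hB f, ha, hatom] with ξ h1 h2 h3
      have hne : ξ - μ ≠ 0 := sub_ne_zero.mpr h3
      have h4 : (ξ - μ) * ((f : Lp ℂ 2 σ) : ℂ → ℂ) ξ
          = cf f + ∑ i : Fin j, a i * ((ξ - μ)⁻¹) ^ ((i : ℕ) + 1) := by
        rw [← h2]; linear_combination -h1
      have h5 : ((f : Lp ℂ 2 σ) : ℂ → ℂ) ξ
          = (ξ - μ)⁻¹ * ((ξ - μ) * ((f : Lp ℂ 2 σ) : ℂ → ℂ) ξ) := by
        field_simp
      rw [h5, h4, mul_add, Finset.mul_sum, Fin.sum_univ_succ]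
      congr 1
      · simp only [Fin.cons_zero, Fin.val_zero, zero_add, pow_one]; ring
      · refine Finset.sum_congr rfl fun i _ => ?_
        simp only [Fin.cons_succ, Fin.val_succ]
        rw [show ((i : ℕ) + 1 + 1) = ((i : ℕ) + 1) + 1 from rfl, pow_succ]
        ring
  -- kernel chain
  set K : ℕ → Submodule ℂ F := fun j => LinearMap.ker (B ^ j) with hK
  have hKmax : ∀ j, K j ≤ Module.End.maxGenEigenspace A μ := by
    intro j y hy
    exact (Module.End.mem_maxGenEigenspace A μ y).mpr ⟨j, by rw [← hBdef]; exact hy⟩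
  have hKmono : ∀ a b : ℕ, a ≤ b → K a ≤ K b := by
    intro a b hab y hy
    have : (B ^ b) y = (B ^ (b - a)) ((B ^ a) y) := by
      rw [← Module.End.mul_apply, ← pow_add, Nat.sub_add_cancel hab]
    rw [LinearMap.mem_ker] at hy ⊢
    rw [this, hy, map_zero]
  have hNle : ∃ n, Module.End.maxGenEigenspace A μ ≤ K n := by
    refine ⟨Module.End.maxGenEigenspaceIndex A μ, ?_⟩
    rw [Module.End.maxGenEigenspace_eq, Module.End.genEigenspace_nat, ← hBdef]
  set p := Nat.find hNle with hpdef
  have hKp : K p = Module.End.maxGenEigenspace A μ :=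
    le_antisymm (hKmax p) (Nat.find_spec hNle)
  have hp1 : 1 ≤ p := by
    rcases Nat.eq_zero_or_pos p with h | h
    · exfalso
      apply hμ
      have := Nat.find_spec hNle
      rw [← hpdef, h] at this
      have hbot : K 0 = ⊥ := by
        rw [hK]
        simp [pow_zero]
        rfl
      exact le_bot_iff.mp (hbot ▸ this)
    · exact h
  -- stabilization / strictness
  have hstab : ∀ k, K k = K (k + 1) → ∀ l, K (k + l) ≤ K k := by
    intro k hk l
    induction l with
    | zero => simp
    | succ l ihl =>
      intro y hy
      have h1 : (B ^ l) y ∈ K (k + 1) := by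
        rw [LinearMap.mem_ker] at hy ⊢
        rw [← Module.End.mul_apply, ← pow_add]
        rw [show k + 1 + l = k + (l + 1) by ring]
        exact hy
      have h2 : (B ^ l) y ∈ K k := hk ▸ h1
      apply ihl
      rw [LinearMap.mem_ker] at h2 ⊢
      rw [pow_add, Module.End.mul_apply]
      exact h2
  have hstrict : ∀ k, k < p → K k ≠ K (k + 1) := by
    intro k hkp hke
    obtain ⟨n0, hn0⟩ := id hNle
    have : Module.End.maxGenEigenspace A μ ≤ K k := by
      rcases le_or_gt n0 k with h | h
      · exact hn0.trans (hKmono n0 k h)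
      · have : K n0 ≤ K k := by
          have := hstab k hke (n0 - k)
          rwa [Nat.add_sub_cancel' h.le] at this
        exact hn0.trans this
    exact Nat.find_min hNle hkp this
  have hdim : ∀ k, k ≤ p → k ≤ Module.finrank ℂ (K k) := by
    intro k
    induction k with
    | zero => simp
    | succ k ihk =>
      intro hkp
      have h1 : K k < K (k + 1) :=
        lt_of_le_of_ne (hKmono k (k + 1) (Nat.le_succ k)) (hstrict k (by omega))
      have h2 := Submodule.finrank_lt_finrank_of_lt h1
      have h3 := ihk (by omega)
      omega
  have hpm : p ≤ Module.finrank ℂ (K p) := hdim p le_rfl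
  -- basis of K p and coefficient matrix
  set m := Module.finrank ℂ (K p) with hm
  let b : Module.Basis (Fin m) ℂ (K p) := Module.finBasis ℂ (K p)
  have hmemker : ∀ k : Fin m, (B ^ p) ((b k : F)) = 0 := fun k => (b k).2
  choose a ha using fun k : Fin m => lem1 p ((b k : F)) (hmemker k)
  -- rows are linearly independent
  have hrows : LinearIndependent ℂ a := by
    rw [Fintype.linearIndependent_iff]
    intro g hg
    have hxK : (∑ k : Fin m, g k • b k : K p) = 0 := by
      have hcoe : ((((∑ k : Fin m, g k • b k : K p) : F)) : Lp ℂ 2 σ)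
          = ∑ k : Fin m, g k • (((b k : F)) : Lp ℂ 2 σ) := by
        have hL : ∀ z : K p, ((z : F) : Lp ℂ 2 σ) = (F.subtype.comp (Submodule.subtype (K p))) z :=
          fun z => rfl
        rw [hL, map_sum]
        exact Finset.sum_congr rfl fun k _ => by rw [LinearMap.map_smul]; rfl
      have hae : ((((∑ k : Fin m, g k • b k : K p) : F) : Lp ℂ 2 σ) : ℂ → ℂ) =ᵐ[σ]
          fun _ => (0 : ℂ) := by
        rw [hcoe]
        refine (comb_ae Finset.univ g _).trans ?_
        have hall : ∀ᵐ ξ ∂σ, ∀ k : Fin m, (((b k : F) : Lp ℂ 2 σ) : ℂ → ℂ) ξ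
            = ∑ i : Fin p, a k i * ((ξ - μ)⁻¹) ^ ((i : ℕ) + 1) :=
          MeasureTheory.ae_all_iff.mpr fun k => ha k
        filter_upwards [hall] with ξ h1
        rw [Finset.sum_congr rfl (fun k _ => by rw [h1 k, Finset.mul_sum])]
        rw [Finset.sum_comm]
        refine Finset.sum_eq_zero fun i _ => ?_
        have h2 : ∑ k : Fin m, g k * (a k i * ((ξ - μ)⁻¹) ^ ((i : ℕ) + 1))
            = (∑ k : Fin m, g k * a k i) * ((ξ - μ)⁻¹) ^ ((i : ℕ) + 1) := by
          rw [Finset.sum_mul]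
          exact Finset.sum_congr rfl fun k _ => by ring
        rw [h2]
        have h3 : (∑ k : Fin m, g k * a k i) = 0 := by
          have := congrFun hg i
          simpa [Finset.sum_apply] using this
        rw [h3, zero_mul]
      have : ((((∑ k : Fin m, g k • b k : K p) : F)) : Lp ℂ 2 σ) = 0 := by
        apply Lp.ext
        refine hae.trans ?_
        exact (Lp.coeFn_zero ℂ 2 σ).symm.mono fun ξ h => by rw [← h]; rfl
      exact Subtype.ext (Subtype.ext this)
    intro i
    have := Fintype.linearIndependent_iff.mp b.linearIndependent g ?_ i
    · exact this
    · exact hxK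
  have hmp : m = p := by
    have h1 := hrows.fintype_card_le_finrank
    have h2 : Module.finrank ℂ (Fin p → ℂ) = p := by simp
    have h3 : Fintype.card (Fin m) = m := Fintype.card_fin m
    omega
  -- square matrix, invertible
  let e : Fin p ≃ Fin m := finCongr hmp.symm
  let M : Matrix (Fin p) (Fin p) ℂ := Matrix.of (fun i j => a (e i) j)
  have hMunit : IsUnit M := by
    rw [← Matrix.linearIndependent_rows_iff_isUnit]
    exact hrows.comp e e.injective
  have hMM : M⁻¹ * M = 1 := Matrix.nonsing_inv_mul M ((Matrix.isUnit_iff_isUnit_det M).mp hMunit)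
  -- the basic rational functions as Lp elements
  let T : Fin p → Lp ℂ 2 σ := fun i => ∑ k : Fin p, (M⁻¹ i k) • (((b (e k) : F)) : Lp ℂ 2 σ)
  have hbk : ∀ᵐ ξ ∂σ, ∀ k : Fin p, (((b (e k) : F) : Lp ℂ 2 σ) : ℂ → ℂ) ξ
      = ∑ j : Fin p, M k j * ((ξ - μ)⁻¹) ^ ((j : ℕ) + 1) :=
    MeasureTheory.ae_all_iff.mpr fun k => ha (e k)
  have hT : ∀ i : Fin p, ((T i : Lp ℂ 2 σ) : ℂ → ℂ) =ᵐ[σ]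
      fun ξ => ((ξ - μ)⁻¹) ^ ((i : ℕ) + 1) := by
    intro i
    refine (comb_ae Finset.univ (fun k => M⁻¹ i k) _).trans ?_
    filter_upwards [hbk] with ξ h1
    rw [Finset.sum_congr rfl (fun k _ => by rw [h1 k])]
    have h2 : ∀ k : Fin p, M⁻¹ i k * ∑ j : Fin p, M k j * ((ξ - μ)⁻¹) ^ ((j : ℕ) + 1)
        = ∑ j : Fin p, M⁻¹ i k * M k j * ((ξ - μ)⁻¹) ^ ((j : ℕ) + 1) := by
      intro k
      rw [Finset.mul_sum]
      exact Finset.sum_congr rfl fun j _ => by ring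
    rw [Finset.sum_congr rfl (fun k _ => h2 k), Finset.sum_comm]
    have h3 : ∀ j : Fin p, ∑ k : Fin p, M⁻¹ i k * M k j * ((ξ - μ)⁻¹) ^ ((j : ℕ) + 1)
        = ((M⁻¹ * M) i j) * ((ξ - μ)⁻¹) ^ ((j : ℕ) + 1) := by
      intro j
      rw [Matrix.mul_apply, Finset.sum_mul]
    rw [Finset.sum_congr rfl (fun j _ => h3 j), hMM]
    simp [Matrix.one_apply]
  have hTmem : ∀ i : Fin p, T i ∈ Submodule.map F.subtype (Module.End.maxGenEigenspace A μ) := by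
    intro i
    apply Submodule.sum_mem
    intro k _
    apply Submodule.smul_mem
    exact ⟨(b (e k) : F), hKp ▸ (b (e k)).2, rfl⟩
  have hMem : ∀ j : ℕ, 1 ≤ j → j ≤ p → MemLp (fun ξ => ((ξ - μ)⁻¹) ^ j) 2 σ := by
    intro j hj1 hjp
    obtain ⟨i0, hi0⟩ : ∃ i : Fin p, (i : ℕ) + 1 = j := ⟨⟨j - 1, by omega⟩, by simp; omega⟩
    have := MemLp.ae_eq (hT i0) (Lp.memLp (T i0))
    rw [hi0] at this
    exact this
  -- the span identification
  have hbT : ∀ k : Fin p, ((b (e k) : F) : Lp ℂ 2 σ) = ∑ j : Fin p, M k j • T j := by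
    intro k
    apply Lp.ext
    have h1 : ((∑ j : Fin p, M k j • T j : Lp ℂ 2 σ) : ℂ → ℂ) =ᵐ[σ]
        fun ξ => ∑ j : Fin p, M k j * ((ξ - μ)⁻¹) ^ ((j : ℕ) + 1) := by
      refine (comb_ae Finset.univ (fun j => M k j) T).trans ?_
      have hallT : ∀ᵐ ξ ∂σ, ∀ j : Fin p, ((T j : Lp ℂ 2 σ) : ℂ → ℂ) ξ
          = ((ξ - μ)⁻¹) ^ ((j : ℕ) + 1) := MeasureTheory.ae_all_iff.mpr hT
      filter_upwards [hallT] with ξ h2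
      exact Finset.sum_congr rfl fun j _ => by rw [h2 j]
    refine Filter.EventuallyEq.trans ?_ h1.symm
    filter_upwards [hbk] with ξ h2
    exact h2 k
  refine ⟨p, hp1, hMem, ?_⟩
  unfold Qspace
  apply le_antisymm
  · rw [Submodule.span_le]
    rintro g ⟨j, hj1, hjp, hg⟩
    obtain ⟨i0, hi0⟩ : ∃ i : Fin p, (i : ℕ) + 1 = j := ⟨⟨j - 1, by omega⟩, by simp; omega⟩
    have hgT : g = T i0 := by
      apply Lp.ext
      refine hg.trans ?_
      have h := hT i0
      rw [hi0] at h
      exact h.symm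
    rw [hgT]
    exact hTmem _
  · rintro x ⟨y, hy, rfl⟩
    have hyK : y ∈ K p := hKp.symm ▸ hy
    set yk : K p := ⟨y, hyK⟩ with hyk
    have hrepr : yk = ∑ k : Fin m, b.repr yk k • b k := (b.sum_repr yk).symm
    have hcoe : F.subtype y = ∑ k : Fin m, b.repr yk k • ((b k : F) : Lp ℂ 2 σ) := by
      have h0 : F.subtype y = (F.subtype.comp (Submodule.subtype (K p))) yk := rfl
      rw [h0]
      conv_lhs => rw [hrepr]
      rw [map_sum]
      exact Finset.sum_congr rfl fun k _ => by rw [LinearMap.map_smul]; rfl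
    rw [hcoe]
    apply Submodule.sum_mem
    intro k _
    apply Submodule.smul_mem
    have hk : b k = b (e (finCongr hmp k)) := by simp [e]
    rw [hk, hbT]
    apply Submodule.sum_mem
    intro j _
    apply Submodule.smul_mem
    apply Submodule.subset_span
    exact ⟨(j : ℕ) + 1, by omega, by omega, hT j⟩

end Aux

theorem stmt2 (σ : MeasureTheory.Measure ℂ) [IsFiniteMeasure σ]
    (hsupp : σ {z : ℂ | ‖z‖ ≠ 1} = 0)
    (F : Submodule ℂ (Lp ℂ 2 σ)) (hfd : FiniteDimensional ℂ F)
    (hinv : ∀ f : Lp ℂ 2 σ, f ∈ F →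
      ∃ g : Lp ℂ 2 σ, g ∈ F ⊔ oneSpan σ ∧ (g : ℂ → ℂ) =ᵐ[σ] fun ξ => ξ * f ξ)
    (hnoind : ∀ (l : ℂ) (g : Lp ℂ 2 σ), g ∈ F →
      (g : ℂ → ℂ) =ᵐ[σ] Set.indicator {l} (fun _ => (1 : ℂ)) → g = 0) :
    ∃ (s : Finset ℂ) (p : ℂ → ℕ),
      (∀ l ∈ s, 1 ≤ p l) ∧
      (∀ l ∈ s, ∀ j : ℕ, 1 ≤ j → j ≤ p l → MemLp (fun ξ => ((ξ - l)⁻¹) ^ j) 2 σ) ∧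
      iSupIndep (fun l : s => Qspace σ (l : ℂ) (p l)) ∧
      F = ⨆ l : s, Qspace σ (l : ℂ) (p l) := by
  classical
  by_cases hbot : F = ⊥
  · refine ⟨∅, fun _ => 1, by simp, by simp, ?_, ?_⟩
    · intro i
      exact absurd i.2 (Finset.notMem_empty _)
    · haveI : IsEmpty ((∅ : Finset ℂ) : Type) := ⟨fun i => (Finset.notMem_empty _ i.2)⟩
      rw [hbot]
      exact (iSup_of_empty _).symm
  · have he : eOne σ ∉ F := fun he => hbot (case_e_mem F hfd hinv hnoind he)
    obtain ⟨A, cf, hspec⟩ := exists_op F hinv he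
    have hind := Module.End.independent_maxGenEigenspace A
    have hfin : {μ : ℂ | Module.End.maxGenEigenspace A μ ≠ ⊥}.Finite :=
      Submodule.finite_ne_bot_of_iSupIndep hind
    have hkey : ∀ μ : ℂ, ∃ pμ : ℕ, Module.End.maxGenEigenspace A μ ≠ ⊥ →
        (1 ≤ pμ ∧ (∀ j : ℕ, 1 ≤ j → j ≤ pμ → MemLp (fun ξ => ((ξ - μ)⁻¹) ^ j) 2 σ) ∧
          Qspace σ μ pμ = Submodule.map F.subtype (Module.End.maxGenEigenspace A μ)) := by
      intro μ
      by_cases h : Module.End.maxGenEigenspace A μ ≠ ⊥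
      · obtain ⟨q, h1, h2, h3⟩ := key F hfd hnoind A cf hspec μ h
        exact ⟨q, fun _ => ⟨h1, h2, h3⟩⟩
      · exact ⟨1, fun h' => absurd h' h⟩
    choose p hp using hkey
    have hQ : (fun l : hfin.toFinset => Qspace σ (l : ℂ) (p l))
        = fun l : hfin.toFinset =>
            Submodule.map F.subtype (Module.End.maxGenEigenspace A (l : ℂ)) :=
      funext fun l => (hp l (hfin.mem_toFinset.mp l.2)).2.2
    refine ⟨hfin.toFinset, p, ?_, ?_, ?_, ?_⟩
    · intro l hl; exact (hp l (hfin.mem_toFinset.mp hl)).1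
    · intro l hl; exact (hp l (hfin.mem_toFinset.mp hl)).2.1
    · rw [show (fun l : hfin.toFinset => Qspace σ (l : ℂ) (p l)) = _ from hQ]
      exact iSupIndep_map (Submodule.injective_subtype F) (hind.comp Subtype.val_injective)
    · rw [show (fun l : hfin.toFinset => Qspace σ (l : ℂ) (p l)) = _ from hQ]
      have h2 : (⊤ : Submodule ℂ F) = ⨆ μ : ℂ, Module.End.maxGenEigenspace A μ :=
        (Module.End.iSup_maxGenEigenspace_eq_top A).symm
      have h3 : (⨆ l : hfin.toFinset,
            Submodule.map F.subtype (Module.End.maxGenEigenspace A (l : ℂ)))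
          = ⨆ μ : ℂ, Submodule.map F.subtype (Module.End.maxGenEigenspace A μ) := by
        apply le_antisymm
        · apply iSup_le
          intro l
          exact le_iSup (fun μ : ℂ =>
            Submodule.map F.subtype (Module.End.maxGenEigenspace A μ)) (l : ℂ)
        · apply iSup_le
          intro μ
          by_cases h : Module.End.maxGenEigenspace A μ ≠ ⊥
          · exact le_iSup (fun l : hfin.toFinset =>
              Submodule.map F.subtype (Module.End.maxGenEigenspace A (l : ℂ)))
              ⟨μ, hfin.mem_toFinset.mpr h⟩
          · rw [not_not] at h
            rw [h, Submodule.map_bot]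
            exact bot_le
      rw [h3, ← Submodule.map_iSup, ← h2, Submodule.map_subtype_top]
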